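/- Let (S,E,I,R) be a classical solution of the 1D SEIR reaction–diffusion system on [0,T]×[0,L] with λ > 0, and let N = S + E + I + R. Then for all (t,x) ∈ [0,T]×[0,L] one has N(t,x) ≤ max( max_{y∈[0,L]} N(0,y), Λ/μ ). In particular, if N(0,y) ≤ Λ/μ for all y ∈ [0,L], then N(t,x) ≤ Λ/μ for all (t,x) ∈ [0,T]×[0,L]. -/

import Mathlib

set_option maxHeartbeats 1000000

open Set Filter Topology

-- boundary derivative sign lemmas
lemma left_max_deriv_nonpos (f : ℝ → ℝ) {d a b : ℝ} (hab : a < b)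
    (hd : HasDerivWithinAt f d (Set.Icc a b) a)
    (hmax : ∀ y ∈ Set.Icc a b, f y ≤ f a) : d ≤ 0 := by
  have hs := hasDerivWithinAt_iff_tendsto_slope.1 hd
  rw [Set.Icc_diff_left] at hs
  haveI : (𝓝[Set.Ioc a b] a).NeBot := by
    rw [nhdsWithin_Ioc_eq_nhdsGT hab]; infer_instance
  refine le_of_tendsto hs ?_
  filter_upwards [eventually_mem_nhdsWithin] with y hy
  rw [slope_def_field]
  have h1 : f y - f a ≤ 0 := sub_nonpos.2 (hmax y (Set.Ioc_subset_Icc_self hy))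
  have h2 : 0 < y - a := sub_pos.2 hy.1
  exact div_nonpos_of_nonpos_of_nonneg h1 h2.le

lemma right_max_deriv_nonneg (f : ℝ → ℝ) {d a b : ℝ} (hab : a < b)
    (hd : HasDerivWithinAt f d (Set.Icc a b) b)
    (hmax : ∀ y ∈ Set.Icc a b, f y ≤ f b) : 0 ≤ d := by
  have hs := hasDerivWithinAt_iff_tendsto_slope.1 hd
  rw [Set.Icc_sdiff_right] at hs
  haveI : (𝓝[Set.Ico a b] b).NeBot := by
    rw [nhdsWithin_Ico_eq_nhdsLT hab]; infer_instance
  refine ge_of_tendsto hs ?_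
  filter_upwards [eventually_mem_nhdsWithin] with y hy
  rw [slope_def_field]
  have h1 : f y - f b ≤ 0 := sub_nonpos.2 (hmax y (Set.Ico_subset_Icc_self hy))
  have h2 : y - b < 0 := sub_neg.2 hy.2
  exact div_nonneg_iff.2 (Or.inr ⟨h1, h2.le⟩)

lemma time_max_deriv_nonneg (f : ℝ → ℝ) {d a t0 : ℝ} (hat : a < t0)
    (hd : HasDerivAt f d t0)
    (hmax : ∀ τ ∈ Set.Icc a t0, f τ ≤ f t0) : 0 ≤ d :=
  right_max_deriv_nonneg f hat (hd.hasDerivWithinAt) hmax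

-- second derivative test at an interior maximum (one-sided version)
lemma second_deriv_test (g G : ℝ → ℝ) {x0 b d : ℝ} (hx0b : x0 < b)
    (hg : ContinuousOn g (Set.Icc x0 b))
    (hderiv : ∀ y ∈ Set.Ioo x0 b, HasDerivAt g (G y) y)
    (hG0 : G x0 = 0) (hGd : HasDerivAt G d x0)
    (hmax : ∀ y ∈ Set.Icc x0 b, g y ≤ g x0) : d ≤ 0 := by
  by_contra hd
  push_neg at hd
  have hs := hasDerivAt_iff_tendsto_slope.1 hGd
  have hev : ∀ᶠ y in 𝓝[≠] x0, 0 < slope G x0 y := hs.eventually (lt_mem_nhds hd)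
  rw [eventually_nhdsWithin_iff, Metric.eventually_nhds_iff] at hev
  obtain ⟨δ, hδ, hball⟩ := hev
  set c := min (x0 + δ / 2) b with hc
  have hx0c : x0 < c := lt_min (by linarith) hx0b
  have hcb : c ≤ b := min_le_right _ _
  have hGpos : ∀ y ∈ Set.Ioo x0 c, 0 < G y := by
    intro y hy
    have hyne : y ∈ ({x0}ᶜ : Set ℝ) := by
      simp only [Set.mem_compl_iff, Set.mem_singleton_iff]
      exact ne_of_gt hy.1
    have hydist : dist y x0 < δ := by
      rw [Real.dist_eq, abs_of_pos (sub_pos.2 hy.1)]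
      have : y < x0 + δ / 2 := lt_of_lt_of_le hy.2 (min_le_left _ _)
      linarith
    have := hball hydist hyne
    rw [slope_def_field, hG0, sub_zero] at this
    have h2 : 0 < y - x0 := sub_pos.2 hy.1
    have := mul_pos this h2
    rwa [div_mul_cancel₀ _ (ne_of_gt h2)] at this
  have hmono : StrictMonoOn g (Set.Icc x0 c) := by
    apply strictMonoOn_of_deriv_pos (convex_Icc x0 c)
      (hg.mono (Set.Icc_subset_Icc_right hcb))
    intro y hy
    rw [interior_Icc] at hy
    have hy' : y ∈ Set.Ioo x0 b := ⟨hy.1, lt_of_lt_of_le hy.2 hcb⟩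
    rw [(hderiv y hy').deriv]
    exact hGpos y hy
  have h1 : g x0 < g c :=
    hmono (Set.left_mem_Icc.2 hx0c.le) (Set.right_mem_Icc.2 hx0c.le) hx0c
  have h2 : g c ≤ g x0 := hmax c ⟨hx0c.le, hcb⟩
  linarith

-- scalar parabolic maximum principle with Neumann boundary conditions
lemma heat_mp (Λ μ lam T L K : ℝ) (hμ : 0 < μ) (hlam : 0 < lam)
    (hT : 0 < T) (hL : 0 < L)
    (N Nt Nx Nxx : ℝ → ℝ → ℝ)
    (hNcont : ContinuousOn (fun q : ℝ × ℝ => N q.1 q.2) (Set.Icc 0 T ×ˢ Set.Icc 0 L))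
    (hNt : ∀ t ∈ Set.Ioc 0 T, ∀ x ∈ Set.Ioo 0 L, HasDerivAt (fun τ => N τ x) (Nt t x) t)
    (hNx : ∀ t ∈ Set.Ioc 0 T, ∀ x ∈ Set.Icc 0 L,
      HasDerivWithinAt (fun y => N t y) (Nx t x) (Set.Icc 0 L) x)
    (hNxx : ∀ t ∈ Set.Ioc 0 T, ∀ x ∈ Set.Ioo 0 L, HasDerivAt (fun y => Nx t y) (Nxx t x) x)
    (heq : ∀ t ∈ Set.Ioc 0 T, ∀ x ∈ Set.Ioo 0 L, Nt t x = lam * Nxx t x + Λ - μ * N t x)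
    (hbc : ∀ t ∈ Set.Ioc 0 T, Nx t 0 = 0 ∧ Nx t L = 0)
    (hK : Λ / μ ≤ K)
    (h0 : ∀ y ∈ Set.Icc 0 L, N 0 y ≤ K) :
    ∀ t ∈ Set.Icc 0 T, ∀ x ∈ Set.Icc 0 L, N t x ≤ K := by
  have key : ∀ ε > (0:ℝ), ∀ t ∈ Set.Icc 0 T, ∀ x ∈ Set.Icc 0 L,
      N t x ≤ K + ε * (T + L ^ 2 / (4 * lam)) := by
    intro ε hε
    set σ : ℝ := ε / (4 * lam) with hσdef
    have hσ : 0 < σ := by positivity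
    set v : ℝ × ℝ → ℝ := fun q => N q.1 q.2 - ε * q.1 - σ * (q.2 - L / 2) ^ 2 with hvdef
    have hvcont : ContinuousOn v (Set.Icc 0 T ×ˢ Set.Icc 0 L) := by
      apply ContinuousOn.sub (ContinuousOn.sub hNcont ?_) ?_
      · exact (continuous_const.mul continuous_fst).continuousOn
      · exact (continuous_const.mul
          ((continuous_snd.sub continuous_const).pow 2)).continuousOn
    have hDcpt : IsCompact (Set.Icc (0:ℝ) T ×ˢ Set.Icc (0:ℝ) L) :=
      isCompact_Icc.prod isCompact_Icc
    have hDne : (Set.Icc (0:ℝ) T ×ˢ Set.Icc (0:ℝ) L).Nonempty :=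
      ⟨(0, 0), ⟨Set.left_mem_Icc.2 hT.le, Set.left_mem_Icc.2 hL.le⟩⟩
    obtain ⟨⟨t0, x0⟩, hq0D, hq0max⟩ := hDcpt.exists_isMaxOn hDne hvcont
    obtain ⟨ht0, hx0⟩ := hq0D
    -- parabola derivative helper
    have hpar : ∀ y : ℝ, HasDerivAt (fun y => σ * (y - L / 2) ^ 2) (σ * (2 * (y - L / 2))) y := by
      intro y
      have h := (((hasDerivAt_id y).sub_const (L / 2)).pow 2).const_mul σ
      convert h using 1
      exacts [rfl, rfl, rfl, by simp]
    suffices hv0 : v (t0, x0) ≤ K by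
      intro t ht x hx
      have h1 : N t x - ε * t - σ * (x - L / 2) ^ 2 ≤ K :=
        le_trans (hq0max (Set.mk_mem_prod ht hx)) hv0
      have hb1 : ε * t ≤ ε * T := by nlinarith [ht.1, ht.2]
      have hb2 : (x - L / 2) ^ 2 ≤ L ^ 2 := by
        nlinarith [hx.1, hx.2, hL]
      have hb3 : σ * (x - L / 2) ^ 2 ≤ σ * L ^ 2 := by nlinarith
      have hb4 : σ * L ^ 2 = ε * (L ^ 2 / (4 * lam)) := by
        rw [hσdef]; ring
      nlinarith
    by_contra hKv
    push_neg at hKv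
    -- t0 > 0
    have ht0pos : 0 < t0 := by
      rcases lt_or_eq_of_le ht0.1 with h | h
      · exact h
      · exfalso
        have h' : t0 = 0 := h.symm
        subst h'
        have hv00 : v (0, x0) = N 0 x0 - ε * 0 - σ * (x0 - L / 2) ^ 2 := rfl
        have h01 := h0 x0 hx0
        have h02 : 0 ≤ σ * (x0 - L / 2) ^ 2 := mul_nonneg hσ.le (sq_nonneg _)
        rw [hv00] at hKv
        linarith
    have ht0' : t0 ∈ Set.Ioc 0 T := ⟨ht0pos, ht0.2⟩
    -- the spatial slice and its derivative
    set g : ℝ → ℝ := fun y => N t0 y - ε * t0 - σ * (y - L / 2) ^ 2 with hgdef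
    set G : ℝ → ℝ := fun y => Nx t0 y - σ * (2 * (y - L / 2)) with hGdef
    have hgmax : ∀ y ∈ Set.Icc 0 L, g y ≤ g x0 := by
      intro y hy
      exact hq0max (Set.mk_mem_prod (Set.Ioc_subset_Icc_self ht0') hy)
    have hgd : ∀ y ∈ Set.Icc 0 L, HasDerivWithinAt g (G y) (Set.Icc 0 L) y := by
      intro y hy
      exact ((hNx t0 ht0' y hy).sub_const (ε * t0)).sub (hpar y).hasDerivWithinAt
    -- x0 interior
    have hx0ne0 : x0 ≠ 0 := by
      intro h
      have hd := hgd 0 (Set.left_mem_Icc.2 hL.le)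
      have hG0 : G 0 = σ * L := by
        simp only [hGdef, (hbc t0 ht0').1]; ring
      rw [hG0] at hd
      have := left_max_deriv_nonpos g hL hd (by rw [← h] at hgmax ⊢; exact fun y hy => hgmax y hy)
      nlinarith
    have hx0neL : x0 ≠ L := by
      intro h
      have hd := hgd L (Set.right_mem_Icc.2 hL.le)
      have hGL : G L = -(σ * L) := by
        simp only [hGdef, (hbc t0 ht0').2]; ring
      rw [hGL] at hd
      have := right_max_deriv_nonneg g hL hd (by rw [← h] at hgmax ⊢; exact fun y hy => hgmax y hy)
      nlinarith
    have hx0i : x0 ∈ Set.Ioo 0 L :=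
      ⟨lt_of_le_of_ne hx0.1 (Ne.symm hx0ne0), lt_of_le_of_ne hx0.2 hx0neL⟩
    have hIccnhds : Set.Icc (0:ℝ) L ∈ 𝓝 x0 := Icc_mem_nhds hx0i.1 hx0i.2
    -- time derivative at the max : Nt t0 x0 ≥ ε
    have htime : 0 ≤ Nt t0 x0 - ε := by
      have hf : HasDerivAt (fun τ => N τ x0 - ε * τ - σ * (x0 - L / 2) ^ 2)
          (Nt t0 x0 - ε) t0 := by
        have h1 : HasDerivAt (fun τ : ℝ => ε * τ) ε t0 := by
          simpa using (hasDerivAt_id t0).const_mul ε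
        exact ((hNt t0 ht0' x0 hx0i).sub h1).sub_const _
      refine time_max_deriv_nonneg _ ht0pos hf ?_
      intro τ hτ
      have hτ' : τ ∈ Set.Icc 0 T := ⟨hτ.1, le_trans hτ.2 ht0.2⟩
      exact hq0max (Set.mk_mem_prod hτ' hx0)
    -- first order condition in space
    have hgd' : HasDerivAt g (G x0) x0 :=
      (hgd x0 (Set.Ioo_subset_Icc_self hx0i)).hasDerivAt hIccnhds
    have hloc : IsLocalMax g x0 := by
      filter_upwards [hIccnhds] with y hy
      exact hgmax y hy
    have hG0 : G x0 = 0 := hloc.hasDerivAt_eq_zero hgd'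
    -- second derivative of the slice
    have hGd : HasDerivAt G (Nxx t0 x0 - σ * 2) x0 := by
      have h2 : HasDerivAt (fun y => σ * (2 * (y - L / 2))) (σ * 2) x0 := by
        have := (((hasDerivAt_id x0).sub_const (L / 2)).const_mul 2).const_mul σ
        convert this using 1
        exacts [rfl, rfl, rfl, by simp]
      exact (hNxx t0 ht0' x0 hx0i).sub h2
    have hNt0cont : ContinuousOn (fun y => N t0 y) (Set.Icc 0 L) := by
      have hmap : Set.MapsTo (fun y : ℝ => ((t0, y) : ℝ × ℝ)) (Set.Icc 0 L)
          (Set.Icc 0 T ×ˢ Set.Icc 0 L) := fun y hy => Set.mk_mem_prod ht0 hy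
      exact hNcont.comp ((continuous_const.prodMk continuous_id).continuousOn) hmap
    have hgcont : ContinuousOn g (Set.Icc x0 L) := by
      apply ContinuousOn.mono ?_ (Set.Icc_subset_Icc_left hx0.1)
      exact (hNt0cont.sub continuousOn_const).sub
        ((continuous_const.mul ((continuous_id.sub continuous_const).pow 2)).continuousOn)
    have hsecond : Nxx t0 x0 - σ * 2 ≤ 0 := by
      refine second_deriv_test g G hx0i.2 hgcont ?_ hG0 hGd ?_
      · intro y hy
        have hy' : y ∈ Set.Icc 0 L := ⟨le_trans hx0.1 hy.1.le, hy.2.le⟩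
        exact (hgd y hy').hasDerivAt (Icc_mem_nhds (lt_of_le_of_lt hx0.1 hy.1) hy.2)
      · intro y hy
        exact hgmax y ⟨le_trans hx0.1 hy.1, hy.2⟩
    -- final contradiction
    have heqN := heq t0 ht0' x0 hx0i
    have hNbig : Λ / μ < N t0 x0 := by
      have hvv : v (t0, x0) = N t0 x0 - ε * t0 - σ * (x0 - L / 2) ^ 2 := rfl
      rw [hvv] at hKv
      have h02 : 0 ≤ σ * (x0 - L / 2) ^ 2 := mul_nonneg hσ.le (sq_nonneg _)
      have h03 : 0 < ε * t0 := mul_pos hε ht0pos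
      linarith
    have hΛlt : Λ < μ * N t0 x0 := by
      rw [div_lt_iff₀ hμ] at hNbig; linarith [hNbig]
    have hlamNxx : lam * Nxx t0 x0 ≤ ε / 2 := by
      have h1 : lam * Nxx t0 x0 ≤ lam * (σ * 2) := by nlinarith
      have h2 : lam * (σ * 2) = ε / 2 := by
        rw [hσdef]
        field_simp
        ring
      linarith
    linarith
  intro t ht x hx
  have hCpos : (0:ℝ) < T + L ^ 2 / (4 * lam) := by positivity
  refine le_of_forall_pos_le_add ?_
  intro ε' hε'
  have := key (ε' / (T + L ^ 2 / (4 * lam))) (by positivity) t ht x hx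
  have heq' : ε' / (T + L ^ 2 / (4 * lam)) * (T + L ^ 2 / (4 * lam)) = ε' :=
    div_mul_cancel₀ _ (ne_of_gt hCpos)
  linarith

/-- For a classical solution of the 1D SEIR reaction–diffusion system,
the total population `N = S + E + I + R` satisfies
`N(t,x) ≤ max (max_y N(0,y)) (Λ/μ)` on `[0,T]×[0,L]`; in particular, if
`N(0,·) ≤ Λ/μ` then `N ≤ Λ/μ` everywhere. -/
theorem seir_classical_solution_total_population_bound
    (Λ μ β p δ η γ lam T L : ℝ)
    (hΛ : 0 ≤ Λ) (hμ : 0 < μ) (hβ : 0 ≤ β) (hp0 : 0 ≤ p) (hp1 : p ≤ 1)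
    (hδ : 0 ≤ δ) (hη : 0 ≤ η) (hγ : 0 ≤ γ) (hlam : 0 < lam)
    (hT : 0 < T) (hL : 0 < L)
    (S E I R : ℝ → ℝ → ℝ)
    -- partial derivatives: in time (·t), first (·x) and second (·xx) in space
    (St Et It Rt Sx Ex Ix Rx Sxx Exx Ixx Rxx : ℝ → ℝ → ℝ)
    -- continuity on the closed space-time cylinder [0,T] × [0,L]
    (hScont : ContinuousOn (fun q : ℝ × ℝ => S q.1 q.2) (Set.Icc 0 T ×ˢ Set.Icc 0 L))
    (hEcont : ContinuousOn (fun q : ℝ × ℝ => E q.1 q.2) (Set.Icc 0 T ×ˢ Set.Icc 0 L))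
    (hIcont : ContinuousOn (fun q : ℝ × ℝ => I q.1 q.2) (Set.Icc 0 T ×ˢ Set.Icc 0 L))
    (hRcont : ContinuousOn (fun q : ℝ × ℝ => R q.1 q.2) (Set.Icc 0 T ×ˢ Set.Icc 0 L))
    -- time partial derivatives on (0,T] × (0,L)
    (hSt : ∀ t ∈ Set.Ioc 0 T, ∀ x ∈ Set.Ioo 0 L, HasDerivAt (fun τ => S τ x) (St t x) t)
    (hEt : ∀ t ∈ Set.Ioc 0 T, ∀ x ∈ Set.Ioo 0 L, HasDerivAt (fun τ => E τ x) (Et t x) t)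
    (hIt : ∀ t ∈ Set.Ioc 0 T, ∀ x ∈ Set.Ioo 0 L, HasDerivAt (fun τ => I τ x) (It t x) t)
    (hRt : ∀ t ∈ Set.Ioc 0 T, ∀ x ∈ Set.Ioo 0 L, HasDerivAt (fun τ => R τ x) (Rt t x) t)
    -- first spatial partial derivatives on (0,T] × [0,L] (one-sided at the endpoints)
    (hSx : ∀ t ∈ Set.Ioc 0 T, ∀ x ∈ Set.Icc 0 L,
      HasDerivWithinAt (fun y => S t y) (Sx t x) (Set.Icc 0 L) x)
    (hEx : ∀ t ∈ Set.Ioc 0 T, ∀ x ∈ Set.Icc 0 L,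
      HasDerivWithinAt (fun y => E t y) (Ex t x) (Set.Icc 0 L) x)
    (hIx : ∀ t ∈ Set.Ioc 0 T, ∀ x ∈ Set.Icc 0 L,
      HasDerivWithinAt (fun y => I t y) (Ix t x) (Set.Icc 0 L) x)
    (hRx : ∀ t ∈ Set.Ioc 0 T, ∀ x ∈ Set.Icc 0 L,
      HasDerivWithinAt (fun y => R t y) (Rx t x) (Set.Icc 0 L) x)
    -- second spatial partial derivatives on (0,T] × (0,L)
    (hSxx : ∀ t ∈ Set.Ioc 0 T, ∀ x ∈ Set.Ioo 0 L, HasDerivAt (fun y => Sx t y) (Sxx t x) x)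
    (hExx : ∀ t ∈ Set.Ioc 0 T, ∀ x ∈ Set.Ioo 0 L, HasDerivAt (fun y => Ex t y) (Exx t x) x)
    (hIxx : ∀ t ∈ Set.Ioc 0 T, ∀ x ∈ Set.Ioo 0 L, HasDerivAt (fun y => Ix t y) (Ixx t x) x)
    (hRxx : ∀ t ∈ Set.Ioc 0 T, ∀ x ∈ Set.Ioo 0 L, HasDerivAt (fun y => Rx t y) (Rxx t x) x)
    -- the SEIR reaction–diffusion equations on (0,T] × (0,L)
    (heqS : ∀ t ∈ Set.Ioc 0 T, ∀ x ∈ Set.Ioo 0 L,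
      St t x = lam * Sxx t x + Λ - β * S t x * I t x - μ * S t x)
    (heqE : ∀ t ∈ Set.Ioc 0 T, ∀ x ∈ Set.Ioo 0 L,
      Et t x = lam * Exx t x + β * p * S t x * I t x - (δ + η + μ) * E t x)
    (heqI : ∀ t ∈ Set.Ioc 0 T, ∀ x ∈ Set.Ioo 0 L,
      It t x = lam * Ixx t x + β * (1 - p) * S t x * I t x + δ * E t x - (γ + μ) * I t x)
    (heqR : ∀ t ∈ Set.Ioc 0 T, ∀ x ∈ Set.Ioo 0 L,
      Rt t x = lam * Rxx t x + η * E t x + γ * I t x - μ * R t x)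
    -- homogeneous Neumann boundary conditions
    (hbcS : ∀ t ∈ Set.Ioc 0 T, Sx t 0 = 0 ∧ Sx t L = 0)
    (hbcE : ∀ t ∈ Set.Ioc 0 T, Ex t 0 = 0 ∧ Ex t L = 0)
    (hbcI : ∀ t ∈ Set.Ioc 0 T, Ix t 0 = 0 ∧ Ix t L = 0)
    (hbcR : ∀ t ∈ Set.Ioc 0 T, Rx t 0 = 0 ∧ Rx t L = 0) :
    (∀ t ∈ Set.Icc 0 T, ∀ x ∈ Set.Icc 0 L,
        S t x + E t x + I t x + R t x ≤
          max (sSup ((fun y => S 0 y + E 0 y + I 0 y + R 0 y) '' Set.Icc 0 L)) (Λ / μ))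
    ∧ ((∀ y ∈ Set.Icc 0 L, S 0 y + E 0 y + I 0 y + R 0 y ≤ Λ / μ) →
        ∀ t ∈ Set.Icc 0 T, ∀ x ∈ Set.Icc 0 L,
          S t x + E t x + I t x + R t x ≤ Λ / μ) := by
  set N : ℝ → ℝ → ℝ := fun t x => S t x + E t x + I t x + R t x with hNdef
  set Nt' : ℝ → ℝ → ℝ := fun t x => St t x + Et t x + It t x + Rt t x with hNtdef
  set Nx' : ℝ → ℝ → ℝ := fun t x => Sx t x + Ex t x + Ix t x + Rx t x with hNxdef
  set Nxx' : ℝ → ℝ → ℝ := fun t x => Sxx t x + Exx t x + Ixx t x + Rxx t x with hNxxdef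
  have hNcont : ContinuousOn (fun q : ℝ × ℝ => N q.1 q.2) (Set.Icc 0 T ×ˢ Set.Icc 0 L) :=
    ((hScont.add hEcont).add hIcont).add hRcont
  have hNt : ∀ t ∈ Set.Ioc 0 T, ∀ x ∈ Set.Ioo 0 L,
      HasDerivAt (fun τ => N τ x) (Nt' t x) t := fun t ht x hx =>
    (((hSt t ht x hx).add (hEt t ht x hx)).add (hIt t ht x hx)).add (hRt t ht x hx)
  have hNx : ∀ t ∈ Set.Ioc 0 T, ∀ x ∈ Set.Icc 0 L,
      HasDerivWithinAt (fun y => N t y) (Nx' t x) (Set.Icc 0 L) x := fun t ht x hx =>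
    (((hSx t ht x hx).add (hEx t ht x hx)).add (hIx t ht x hx)).add (hRx t ht x hx)
  have hNxx : ∀ t ∈ Set.Ioc 0 T, ∀ x ∈ Set.Ioo 0 L,
      HasDerivAt (fun y => Nx' t y) (Nxx' t x) x := fun t ht x hx =>
    (((hSxx t ht x hx).add (hExx t ht x hx)).add (hIxx t ht x hx)).add (hRxx t ht x hx)
  have heqN : ∀ t ∈ Set.Ioc 0 T, ∀ x ∈ Set.Ioo 0 L,
      Nt' t x = lam * Nxx' t x + Λ - μ * N t x := by
    intro t ht x hx
    show St t x + Et t x + It t x + Rt t x =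
      lam * (Sxx t x + Exx t x + Ixx t x + Rxx t x) + Λ -
        μ * (S t x + E t x + I t x + R t x)
    rw [heqS t ht x hx, heqE t ht x hx, heqI t ht x hx, heqR t ht x hx]
    ring
  have hbcN : ∀ t ∈ Set.Ioc 0 T, Nx' t 0 = 0 ∧ Nx' t L = 0 := by
    intro t ht
    constructor
    · show Sx t 0 + Ex t 0 + Ix t 0 + Rx t 0 = 0
      rw [(hbcS t ht).1, (hbcE t ht).1, (hbcI t ht).1, (hbcR t ht).1]; ring
    · show Sx t L + Ex t L + Ix t L + Rx t L = 0
      rw [(hbcS t ht).2, (hbcE t ht).2, (hbcI t ht).2, (hbcR t ht).2]; ring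
  have hN0cont : ContinuousOn (fun y => N 0 y) (Set.Icc 0 L) := by
    have hmap : Set.MapsTo (fun y : ℝ => ((0, y) : ℝ × ℝ)) (Set.Icc 0 L)
        (Set.Icc 0 T ×ˢ Set.Icc 0 L) := fun y hy =>
      Set.mk_mem_prod (Set.left_mem_Icc.2 hT.le) hy
    exact hNcont.comp ((continuous_const.prodMk continuous_id).continuousOn) hmap
  have himg : ((fun y => S 0 y + E 0 y + I 0 y + R 0 y) '' Set.Icc 0 L)
      = ((fun y => N 0 y) '' Set.Icc 0 L) := rfl
  have hne : ((fun y => N 0 y) '' Set.Icc 0 L).Nonempty :=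
    ⟨N 0 0, Set.mem_image_of_mem _ (Set.left_mem_Icc.2 hL.le)⟩
  have hbdd : BddAbove ((fun y => N 0 y) '' Set.Icc 0 L) :=
    (isCompact_Icc.image_of_continuousOn hN0cont).bddAbove
  constructor
  · -- main bound with K = max M0 (Λ/μ)
    have h0 : ∀ y ∈ Set.Icc 0 L, N 0 y ≤
        max (sSup ((fun y => S 0 y + E 0 y + I 0 y + R 0 y) '' Set.Icc 0 L)) (Λ / μ) := by
      intro y hy
      refine le_max_of_le_left ?_
      rw [himg]
      exact le_csSup hbdd (Set.mem_image_of_mem _ hy)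
    have hKge : Λ / μ ≤
        max (sSup ((fun y => S 0 y + E 0 y + I 0 y + R 0 y) '' Set.Icc 0 L)) (Λ / μ) :=
      le_max_right _ _
    exact heat_mp Λ μ lam T L _ hμ hlam hT hL N Nt' Nx' Nxx'
      hNcont hNt hNx hNxx heqN hbcN hKge h0
  · intro hinit
    exact heat_mp Λ μ lam T L (Λ / μ) hμ hlam hT hL N Nt' Nx' Nxx'
      hNcont hNt hNx hNxx heqN hbcN le_rfl hinit
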